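/- For all positive integers ℓ and q there exists κ₀ > 0 such that χ₁(κ; ℓ, q) < 0 for every κ ∈ (0, κ₀). -/

import Mathlib

open MeasureTheory Real Set Filter
open scoped ENNReal

noncomputable section

/-- The quantity `χ₁(κ; ℓ, q)`. -/
def chi1 (κ : ℝ) (l q : ℕ) : ℝ :=
  if l = q then
    κ + Real.sin (4 * π * q * κ) / (4 * π * q) - Real.sin (2 * π * q * κ) / (π * q)
  else
    Real.sin (2 * π * ((l:ℝ) - q) * κ) / (2 * π * ((l:ℝ) - q))
      + Real.sin (2 * π * ((l:ℝ) + q) * κ) / (2 * π * ((l:ℝ) + q))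
      - Real.sin (2 * π * q * κ) / (π * q)

/-- Taylor-type bound for `sin (tκ)/t`. -/
lemma S_bound_aux (t κ : ℝ) (ht : t ≠ 0) (hκ : 0 ≤ κ) (h : |t * κ| ≤ 1) :
    |Real.sin (t * κ) / t - (κ - t ^ 2 * κ ^ 3 / 6)| ≤ |t| ^ 3 * κ ^ 4 * (5 / 96) := by
  have hb := Real.sin_bound h
  have heq : Real.sin (t * κ) / t - (κ - t ^ 2 * κ ^ 3 / 6)
      = (Real.sin (t * κ) - (t * κ - (t * κ) ^ 3 / 6)) / t := by
    field_simp
  rw [heq, abs_div]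
  have ht' : (0:ℝ) < |t| := abs_pos.mpr ht
  rw [div_le_iff₀ ht']
  calc |Real.sin (t * κ) - (t * κ - (t * κ) ^ 3 / 6)| ≤ |t * κ| ^ 4 * (5 / 96) := hb.trans (by rw [pow_succ]; nlinarith [mul_le_mul_of_nonneg_left h (pow_nonneg (abs_nonneg (t * κ)) 4), pow_nonneg (abs_nonneg (t * κ)) 4])
    _ = |t| ^ 3 * κ ^ 4 * (5 / 96) * |t| := by
        rw [abs_mul, abs_of_nonneg hκ]; ring

set_option maxHeartbeats 1600000 in
/-- `χ₁(κ; ℓ, q) < 0` for all sufficiently small `κ > 0`. -/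
theorem stmt15 (l q : ℕ) (hl : 0 < l) (hq : 0 < q) :
    ∃ κ₀ > (0:ℝ), ∀ κ : ℝ, 0 < κ → κ < κ₀ → chi1 κ l q < 0 := by
  have hπ := Real.pi_pos
  have hQ : (1:ℝ) ≤ (q:ℝ) := by exact_mod_cast hq
  have hL : (1:ℝ) ≤ (l:ℝ) := by exact_mod_cast hl
  have hQ0 : (0:ℝ) < (q:ℝ) := by linarith
  have hL0 : (0:ℝ) < (l:ℝ) := by linarith
  by_cases hlq : l = q
  · -- diagonal case
    set T : ℝ := 2 * π * q with hT
    have hT0 : 0 < T := by positivity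
    refine ⟨1 / (4 * π * q), by positivity, fun κ hκ hκ' => ?_⟩
    rw [chi1, if_pos hlq]
    have hTκ : 2 * T * κ < 1 := by
      rw [one_div] at hκ'
      calc 2 * T * κ = (4 * π * q) * κ := by rw [hT]; ring
        _ < (4 * π * q) * (4 * π * q)⁻¹ := by
            apply mul_lt_mul_of_pos_left hκ' (by positivity)
        _ = 1 := by field_simp
    have h2T : (0:ℝ) < 2 * T := by positivity
    have habs1 : |(2 * T) * κ| ≤ 1 := by
      rw [abs_of_nonneg (by positivity)]; nlinarith
    have habs2 : |T * κ| ≤ 1 := by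
      rw [abs_of_nonneg (by positivity)]; nlinarith
    have h1 := S_bound_aux (2 * T) κ (by positivity) hκ.le habs1
    have h2 := S_bound_aux T κ (by positivity) hκ.le habs2
    rw [abs_of_pos h2T] at h1
    rw [abs_of_pos hT0] at h2
    rw [abs_le] at h1 h2
    obtain ⟨h1a, h1b⟩ := h1
    obtain ⟨h2a, h2b⟩ := h2
    have e1 : (4 * π * (q:ℝ)) * κ = (2 * T) * κ := by rw [hT]; ring
    have e2 : (2 * π * (q:ℝ)) * κ = T * κ := by rw [hT]
    have e3 : Real.sin (T * κ) / (π * q) = 2 * (Real.sin (T * κ) / T) := by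
      rw [hT]; field_simp
    rw [e1, e2, e3]
    have e4 : (4 * π * (q:ℝ)) = 2 * T := by rw [hT]; ring
    rw [e4]
    nlinarith [mul_pos hκ hκ, mul_pos (mul_pos hκ hκ) hκ, sq_nonneg (T*κ),
      mul_pos hT0 hκ, mul_pos (mul_pos hT0 hT0) (mul_pos (mul_pos hκ hκ) (mul_pos hκ hκ)),
      mul_pos (mul_pos hT0 hT0) (mul_pos hκ (mul_pos hκ hκ))]
  · -- off-diagonal case
    have hLQ : (l:ℝ) ≠ (q:ℝ) := by exact_mod_cast fun h => hlq (Nat.cast_injective h)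
    refine ⟨(l:ℝ) ^ 2 / (2 * π * ((l:ℝ) + (q:ℝ)) ^ 3), by positivity, fun κ hκ hκ' => ?_⟩
    rw [chi1, if_neg hlq]
    set L : ℝ := (l:ℝ) with hLdef
    set Q : ℝ := (q:ℝ) with hQdef
    set A : ℝ := 2 * π * (L - Q) with hA
    set B : ℝ := 2 * π * (L + Q) with hB
    set C : ℝ := 2 * π * Q with hC
    set κ₀ : ℝ := L ^ 2 / (2 * π * (L + Q) ^ 3) with hκ₀
    have hA0 : A ≠ 0 := by
      rw [hA]
      have h2 : L - Q ≠ 0 := sub_ne_zero_of_ne hLQ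
      positivity
    have hB0 : (0:ℝ) < B := by rw [hB]; positivity
    have hC0 : (0:ℝ) < C := by rw [hC]; positivity
    have hAB : |A| ≤ B := by
      rw [hA, hB, abs_mul, abs_of_nonneg (by positivity : (0:ℝ) ≤ 2 * π)]
      have h1 : |L - Q| ≤ L + Q := by
        rw [abs_le]; constructor <;> nlinarith
      exact mul_le_mul_of_nonneg_left h1 (by positivity)
    have hCB : C ≤ B := by rw [hC, hB]; nlinarith [mul_pos hπ hL0]
    have hBκ : B * κ ≤ 1 := by
      have h1 : B * κ < B * κ₀ := mul_lt_mul_of_pos_left hκ' hB0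
      have h2 : B * κ₀ ≤ 1 := by
        have he : B * κ₀ = L ^ 2 / (L + Q) ^ 2 := by
          rw [hB, hκ₀]; field_simp
        rw [he, div_le_one (by positivity)]
        nlinarith
      linarith
    have habsA : |A * κ| ≤ 1 := by
      rw [abs_mul, abs_of_nonneg hκ.le]
      calc |A| * κ ≤ B * κ := mul_le_mul_of_nonneg_right hAB hκ.le
        _ ≤ 1 := hBκ
    have habsB : |B * κ| ≤ 1 := by
      rw [abs_of_nonneg (by positivity)]; exact hBκ
    have habsC : |C * κ| ≤ 1 := by
      rw [abs_of_nonneg (by positivity)]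
      calc C * κ ≤ B * κ := mul_le_mul_of_nonneg_right hCB hκ.le
        _ ≤ 1 := hBκ
    have h1 := S_bound_aux A κ hA0 hκ.le habsA
    have h2 := S_bound_aux B κ (ne_of_gt hB0) hκ.le habsB
    have h3 := S_bound_aux C κ (ne_of_gt hC0) hκ.le habsC
    rw [abs_of_pos hB0] at h2
    rw [abs_of_pos hC0] at h3
    rw [abs_le] at h1 h2 h3
    obtain ⟨h1a, h1b⟩ := h1
    obtain ⟨h2a, h2b⟩ := h2
    obtain ⟨h3a, h3b⟩ := h3
    have e3 : Real.sin (C * κ) / (π * Q) = 2 * (Real.sin (C * κ) / C) := by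
      rw [hC]; field_simp
    rw [e3]
    have hE3 : |A| ^ 3 ≤ B ^ 3 := pow_le_pow_left₀ (abs_nonneg A) hAB 3
    have hC3 : C ^ 3 ≤ B ^ 3 := pow_le_pow_left₀ hC0.le hCB 3
    have hA2 : A ^ 2 = |A| ^ 2 := (sq_abs A).symm
    have hκ4 : (0:ℝ) < κ ^ 4 := by positivity
    have hκ3 : (0:ℝ) < κ ^ 3 := by positivity
    have key : Real.sin (A * κ) / A + Real.sin (B * κ) / B - 2 * (Real.sin (C * κ) / C)
        ≤ -(4/3) * π ^ 2 * L ^ 2 * κ ^ 3 + (5/24) * B ^ 3 * κ ^ 4 := by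
      have p1 : |A| ^ 3 * κ ^ 4 * (5/96) ≤ B ^ 3 * κ ^ 4 * (5/96) := by
        apply mul_le_mul_of_nonneg_right _ (by norm_num)
        exact mul_le_mul_of_nonneg_right hE3 hκ4.le
      have p2 : C ^ 3 * κ ^ 4 * (5/96) ≤ B ^ 3 * κ ^ 4 * (5/96) := by
        apply mul_le_mul_of_nonneg_right _ (by norm_num)
        exact mul_le_mul_of_nonneg_right hC3 hκ4.le
      have hsum3 : A ^ 2 * κ ^ 3 + B ^ 2 * κ ^ 3 - 2 * (C ^ 2 * κ ^ 3)
          = 8 * π ^ 2 * L ^ 2 * κ ^ 3 := by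
        have : (A ^ 2 + B ^ 2 - 2 * C ^ 2) * κ ^ 3 = 8 * π ^ 2 * L ^ 2 * κ ^ 3 := by
          rw [show A ^ 2 + B ^ 2 - 2 * C ^ 2 = 8 * π ^ 2 * L ^ 2 by rw [hA, hB, hC]; ring]
        linarith [this, sq_nonneg A]
      linarith [h1b, h2b, h3a, p1, p2, hsum3]
    have step2 : (5/24) * B ^ 3 * κ ^ 4 < (5/6) * π ^ 2 * L ^ 2 * κ ^ 3 := by
      have hLQ0 : (0:ℝ) < L + Q := by linarith
      have hr : (5/24) * B ^ 3 * κ ^ 3 * κ₀ = (5/6) * π ^ 2 * L ^ 2 * κ ^ 3 := by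
        rw [hB, hκ₀]
        field_simp
        ring
      calc (5/24) * B ^ 3 * κ ^ 4 = (5/24) * B ^ 3 * κ ^ 3 * κ := by ring
        _ < (5/24) * B ^ 3 * κ ^ 3 * κ₀ := by
            apply mul_lt_mul_of_pos_left hκ' (by positivity)
        _ = (5/6) * π ^ 2 * L ^ 2 * κ ^ 3 := hr
    have hfin : (0:ℝ) < π ^ 2 * L ^ 2 * κ ^ 3 := by positivity
    linarith
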